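/- arXiv:2106.12231 — 2 statements merged into one kernel-verified Lean document; each statement's English description precedes it below -/
import Mathlib

section
/- Let H be a Hilbert space, Q ∈ ℕ, and let P_1, …, P_Q be orthogonal projections onto closed subspaces H_1, …, H_Q of H. Let θ = min_{q ≠ k} ∠(H_q, H_k) be the minimal first principal angle between distinct subspaces, where ∠(U, W) = min{ arccos⟨u, w⟩ : u ∈ U, w ∈ W, ‖u‖ = ‖w‖ = 1 }. Then for every f ∈ H, ∑_{q=1}^Q ‖P_q f‖² ≤ (1 + Q² cos θ) ‖f‖². -/
local notation "⟪" x ", " y "⟫_ℝ" => @inner ℝ _ _ x y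

private lemma inner_le_of_angle {H : Type*} [NormedAddCommGroup H] [InnerProductSpace ℝ H]
    {U W : Submodule ℝ H} {c : ℝ} (hc0 : 0 ≤ c)
    (h : ∀ u ∈ U, ∀ w ∈ W, ‖u‖ = 1 → ‖w‖ = 1 → ⟪u, w⟫_ℝ ≤ c)
    {u w : H} (hu : u ∈ U) (hw : w ∈ W) : ⟪u, w⟫_ℝ ≤ c * ‖u‖ * ‖w‖ := by
  rcases eq_or_ne u 0 with rfl | hu0
  · simp [mul_nonneg, mul_nonneg hc0 (norm_nonneg _), norm_nonneg]
  rcases eq_or_ne w 0 with rfl | hw0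
  · simpa using mul_nonneg (mul_nonneg hc0 (norm_nonneg u)) (le_refl (0:ℝ))
  have hnu : ‖u‖ ≠ 0 := norm_ne_zero_iff.mpr hu0
  have hnw : ‖w‖ ≠ 0 := norm_ne_zero_iff.mpr hw0
  have key := h ((‖u‖)⁻¹ • u) (U.smul_mem _ hu) ((‖w‖)⁻¹ • w) (W.smul_mem _ hw)
    (by rw [norm_smul, norm_inv, norm_norm, inv_mul_cancel₀ hnu]) (by rw [norm_smul, norm_inv, norm_norm, inv_mul_cancel₀ hnw])
  rw [real_inner_smul_left, real_inner_smul_right] at key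
  have hpu : (0:ℝ) < ‖u‖ := lt_of_le_of_ne (norm_nonneg u) (Ne.symm hnu)
  have hpw : (0:ℝ) < ‖w‖ := lt_of_le_of_ne (norm_nonneg w) (Ne.symm hnw)
  calc ⟪u, w⟫_ℝ = ‖u‖ * ‖w‖ * ((‖u‖)⁻¹ * ((‖w‖)⁻¹ * ⟪u, w⟫_ℝ)) := by field_simp
    _ ≤ ‖u‖ * ‖w‖ * c := by
        apply mul_le_mul_of_nonneg_left key (by positivity)
    _ = c * ‖u‖ * ‖w‖ := by ring

/-- Generalized Bessel inequality (Proposition 2 of the paper):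
if `c` bounds the cosine of the first principal angle between any two distinct
subspaces `K q`, then `∑ q ‖P_q f‖² ≤ (1 + Q² c) ‖f‖²`. -/
theorem stmt_0
    {H : Type*} [NormedAddCommGroup H] [InnerProductSpace ℝ H] [CompleteSpace H]
    (Q : ℕ) (K : Fin Q → Submodule ℝ H) [∀ q, Submodule.HasOrthogonalProjection (K q)]
    (c : ℝ) (hc0 : 0 ≤ c)
    (hc : ∀ q k, q ≠ k → ∀ u ∈ K q, ∀ w ∈ K k, ‖u‖ = 1 → ‖w‖ = 1 → ⟪u, w⟫_ℝ ≤ c)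
    (f : H) :
    ∑ q, ‖(Submodule.orthogonalProjectionOnto (K q) f : H)‖ ^ 2 ≤ (1 + (Q : ℝ) ^ 2 * c) * ‖f‖ ^ 2 := by
  set P : Fin Q → H := fun q => (Submodule.orthogonalProjectionOnto (K q) f : H) with hP
  set g : H := ∑ q, P q with hg
  set S : ℝ := ∑ q, ‖P q‖ ^ 2 with hS
  have hPle : ∀ q, ‖P q‖ ≤ ‖f‖ := by
    intro q
    exact (Submodule.orthogonalProjectionOnto (K q)).le_of_opNorm_le
      (Submodule.orthogonalProjectionOnto_norm_le (K q)) f |>.trans (by simp)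
  -- S = ⟪g, f⟫
  have hSg : S = ⟪g, f⟫_ℝ := by
    rw [hg, sum_inner]
    refine Finset.sum_congr rfl fun q _ => ?_
    have h0 : ⟪f - (Submodule.orthogonalProjectionOnto (K q) f : H),
        (Submodule.orthogonalProjectionOnto (K q) f : H)⟫_ℝ = 0 :=
      Submodule.starProjection_inner_eq_zero (K := K q) f _ (Submodule.coe_mem _)
    rw [inner_sub_left, sub_eq_zero] at h0
    simp only [hP]
    rw [real_inner_comm, h0, real_inner_self_eq_norm_sq]
  -- cross terms
  have hcross : ∀ q k : Fin Q, q ≠ k → ⟪P q, P k⟫_ℝ ≤ c * ‖f‖ ^ 2 := by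
    intro q k hqk
    have := inner_le_of_angle hc0 (hc q k hqk)
      (Submodule.coe_mem (Submodule.orthogonalProjectionOnto (K q) f))
      (Submodule.coe_mem (Submodule.orthogonalProjectionOnto (K k) f))
    refine this.trans ?_
    have h1 := hPle q
    have h2 := hPle k
    have := mul_le_mul (mul_le_mul_of_nonneg_left h1 hc0) h2 (norm_nonneg _)
      (mul_nonneg hc0 (norm_nonneg f))
    calc c * ‖P q‖ * ‖P k‖ ≤ c * ‖f‖ * ‖f‖ := this
      _ = c * ‖f‖ ^ 2 := by ring
  -- ‖g‖² ≤ S + Q² c ‖f‖²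
  have hg2 : ‖g‖ ^ 2 ≤ S + (Q : ℝ) ^ 2 * c * ‖f‖ ^ 2 := by
    have : ‖g‖ ^ 2 = ∑ q, ∑ k, ⟪P q, P k⟫_ℝ := by
      rw [← real_inner_self_eq_norm_sq, hg, sum_inner]
      exact Finset.sum_congr rfl fun q _ => by rw [inner_sum]
    rw [this]
    have split : ∀ q : Fin Q, ∑ k, ⟪P q, P k⟫_ℝ
        = ‖P q‖ ^ 2 + ∑ k ∈ Finset.univ.erase q, ⟪P q, P k⟫_ℝ := by
      intro q
      rw [← Finset.add_sum_erase _ _ (Finset.mem_univ q), real_inner_self_eq_norm_sq]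
    calc ∑ q, ∑ k, ⟪P q, P k⟫_ℝ
        = S + ∑ q, ∑ k ∈ Finset.univ.erase q, ⟪P q, P k⟫_ℝ := by
          rw [hS, ← Finset.sum_add_distrib]
          exact Finset.sum_congr rfl fun q _ => split q
      _ ≤ S + (Q : ℝ) ^ 2 * c * ‖f‖ ^ 2 := by
          gcongr S + ?_
          calc ∑ q, ∑ k ∈ Finset.univ.erase q, ⟪P q, P k⟫_ℝ
              ≤ ∑ q : Fin Q, ∑ k ∈ Finset.univ.erase q, c * ‖f‖ ^ 2 := by
                refine Finset.sum_le_sum fun q _ => Finset.sum_le_sum fun k hk => ?_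
                exact hcross q k (Finset.ne_of_mem_erase hk).symm
            _ ≤ (Q : ℝ) ^ 2 * c * ‖f‖ ^ 2 := by
                simp only [Finset.sum_const, nsmul_eq_mul]
                calc ∑ q : Fin Q, ((Finset.univ.erase q).card : ℝ) * (c * ‖f‖ ^ 2)
                    ≤ ∑ q : Fin Q, (Q : ℝ) * (c * ‖f‖ ^ 2) := by
                      refine Finset.sum_le_sum fun q _ => ?_
                      have : (Finset.univ.erase q).card ≤ Q := by
                        simpa using (Finset.card_erase_le).trans (by simp)
                      exact mul_le_mul_of_nonneg_right (by exact_mod_cast this) (by positivity)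
                  _ = (Q : ℝ) ^ 2 * c * ‖f‖ ^ 2 := by
                      simp [Finset.sum_const]; ring
  have hSle : S ≤ ‖g‖ * ‖f‖ := hSg ▸ real_inner_le_norm g f
  have hS0 : 0 ≤ S := Finset.sum_nonneg fun q _ => by positivity
  have hg0 : (0:ℝ) ≤ ‖g‖ := norm_nonneg _
  have hf0 : (0:ℝ) ≤ ‖f‖ := norm_nonneg _
  nlinarith [sq_nonneg (‖g‖ - ‖f‖), sq_nonneg (S - (1 + (Q:ℝ)^2*c) * ‖f‖^2),
    mul_nonneg hS0 hf0, mul_nonneg (mul_nonneg hc0 hf0) hf0, sq_nonneg ‖f‖,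
    mul_le_mul_of_nonneg_left hSle hS0, mul_self_nonneg ((Q:ℝ)^2*c*‖f‖^2)]
end

section
/- Local-to-global effective dimension bound: Let φ(x_1), …, φ(x_n) ∈ H with ‖φ(x_i)‖ ≤ κ for all i, let {[n]_q}_{q=1}^Q be a partition of {1,…,n} with sizes n_q, ρ_q = n_q/n, T = (1/n)∑_i φ(x_i)⊗φ(x_i), T_q = (1/n_q)∑_{i∈[n]_q} φ(x_i)⊗φ(x_i), H_q = span{φ(x_i) : i ∈ [n]_q}, and θ = min_{q≠k} ∠(H_q, H_k). For λ > 0, set λ_q = λ/ρ_q, N(λ) = Tr((T+λ)^{-1}T), and N_q(λ_q) = Tr((T_q+λ_q)^{-1}T_q). Then ∑_{q=1}^Q N_q(λ_q) ≤ (1 + κ² cos²θ / λ) N(λ). -/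
local notation "⟪" x ", " y "⟫_ℝ" => @inner ℝ _ _ x y

open LinearMap TensorProduct

lemma my_discrim_cs {a b p : ℝ} (h : ∀ t : ℝ, 0 ≤ b * (t*t) + (2*p) * t + a) : p^2 ≤ a * b := by
  have := discrim_le_zero h
  rw [discrim] at this; nlinarith

section helpers
variable {H : Type*} [NormedAddCommGroup H] [InnerProductSpace ℝ H] [FiniteDimensional ℝ H]

lemma my_trace_rankOne (x y : H) :
    LinearMap.trace ℝ H (dualTensorHom ℝ H H ((innerₗ H x) ⊗ₜ[ℝ] y)) = ⟪x, y⟫_ℝ := by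
  simp

lemma my_trace_sum {ι : Type*} (s : Finset ι) (ψ χ : ι → H) (a : ℝ) (f : H →ₗ[ℝ] H)
    (hf : ∀ h, f h = a • ∑ i ∈ s, ⟪h, ψ i⟫_ℝ • χ i) :
    LinearMap.trace ℝ H f = a * ∑ i ∈ s, ⟪χ i, ψ i⟫_ℝ := by
  have hfe : f = a • ∑ i ∈ s, dualTensorHom ℝ H H ((innerₗ H (ψ i)) ⊗ₜ[ℝ] (χ i)) := by
    ext h
    rw [hf h]
    simp [dualTensorHom_apply, real_inner_comm]
  rw [hfe, map_smul, map_sum]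
  simp only [my_trace_rankOne, smul_eq_mul]
  congr 1
  exact Finset.sum_congr rfl fun i _ => real_inner_comm _ _

end helpers

set_option maxHeartbeats 1000000 in
/-- Local-to-global effective dimension bound (Proposition 3 of the paper):
with `λ_q = λ / ρ_q`, `∑_q N_q(λ_q) ≤ (1 + κ² cos²θ / λ) N(λ)`, where `c`
bounds the cosine of the minimal principal angle between the local spans. -/
theorem stmt_15
    {H : Type*} [NormedAddCommGroup H] [InnerProductSpace ℝ H] [FiniteDimensional ℝ H]
    (n Q : ℕ) (hn : 0 < n) (φ : Fin n → H) (κ : ℝ) (hκ : ∀ i, ‖φ i‖ ≤ κ)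
    (I : Fin Q → Finset (Fin n))
    (hdisj : ∀ q k, q ≠ k → Disjoint (I q) (I k))
    (hcover : ∀ i, ∃ q, i ∈ I q)
    (hne : ∀ q, (I q).Nonempty)
    (T : H →ₗ[ℝ] H) (hT : ∀ h, T h = (n : ℝ)⁻¹ • ∑ i, ⟪h, φ i⟫_ℝ • φ i)
    (Tq : Fin Q → (H →ₗ[ℝ] H))
    (hTq : ∀ q h, Tq q h = (((I q).card : ℝ))⁻¹ • ∑ i ∈ I q, ⟪h, φ i⟫_ℝ • φ i)
    (lam : ℝ) (hlam : 0 < lam)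
    (lamq : Fin Q → ℝ) (hlamq : ∀ q, lamq q = lam / (((I q).card : ℝ) / n))
    (c : ℝ) (hc0 : 0 ≤ c)
    (hc : ∀ q k, q ≠ k →
      ∀ u ∈ Submodule.span ℝ (φ '' (I q : Set (Fin n))),
      ∀ w ∈ Submodule.span ℝ (φ '' (I k : Set (Fin n))),
      ‖u‖ = 1 → ‖w‖ = 1 → ⟪u, w⟫_ℝ ≤ c)
    (R : H →ₗ[ℝ] H)
    (hR1 : (T + lam • LinearMap.id) ∘ₗ R = LinearMap.id)
    (hR2 : R ∘ₗ (T + lam • LinearMap.id) = LinearMap.id)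
    (Rq : Fin Q → (H →ₗ[ℝ] H))
    (hRq1 : ∀ q, (Tq q + lamq q • LinearMap.id) ∘ₗ Rq q = LinearMap.id)
    (hRq2 : ∀ q, Rq q ∘ₗ (Tq q + lamq q • LinearMap.id) = LinearMap.id) :
    ∑ q, LinearMap.trace ℝ H (Rq q ∘ₗ Tq q)
      ≤ (1 + κ ^ 2 * c ^ 2 / lam) * LinearMap.trace ℝ H (R ∘ₗ T) := by
  have hn' : (0:ℝ) < n := Nat.cast_pos.mpr hn
  have hκ0 : 0 ≤ κ := le_trans (norm_nonneg _) (hκ ⟨0, hn⟩)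
  set C : ℝ := 1 + κ ^ 2 * c ^ 2 / lam with hC
  have hC0 : 0 ≤ C := by positivity
  -- inner product formulas
  have hTinner : ∀ z w : H, ⟪T z, w⟫_ℝ = (n : ℝ)⁻¹ * ∑ i, ⟪z, φ i⟫_ℝ * ⟪w, φ i⟫_ℝ := by
    intro z w
    rw [hT z, real_inner_smul_left, sum_inner]
    congr 1
    refine Finset.sum_congr rfl fun i _ => ?_
    rw [real_inner_smul_left, real_inner_comm (φ i) w]
  have hTqinner : ∀ q (z w : H),
      ⟪Tq q z, w⟫_ℝ = (((I q).card : ℝ))⁻¹ * ∑ i ∈ I q, ⟪z, φ i⟫_ℝ * ⟪w, φ i⟫_ℝ := by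
    intro q z w
    rw [hTq q z, real_inner_smul_left, sum_inner]
    congr 1
    refine Finset.sum_congr rfl fun i _ => ?_
    rw [real_inner_smul_left, real_inner_comm (φ i) w]
  have hTpos : ∀ z : H, 0 ≤ ⟪T z, z⟫_ℝ := by
    intro z
    rw [hTinner]
    exact mul_nonneg (by positivity)
      (Finset.sum_nonneg fun i _ => mul_self_nonneg _)
  have hTqpos : ∀ q (z : H), 0 ≤ ⟪Tq q z, z⟫_ℝ := by
    intro q z
    rw [hTqinner]
    exact mul_nonneg (by positivity)
      (Finset.sum_nonneg fun i _ => mul_self_nonneg _)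
  have hTsymm : ∀ z w : H, ⟪T z, w⟫_ℝ = ⟪T w, z⟫_ℝ := by
    intro z w
    rw [hTinner, hTinner]
    congr 1
    exact Finset.sum_congr rfl fun i _ => mul_comm _ _
  -- (T + lam) R x = x pointwise
  have hRid : ∀ x : H, T (R x) + lam • R x = x := by
    intro x
    have := LinearMap.ext_iff.mp hR1 x
    simpa using this
  have hRqid : ∀ q (x : H), Tq q (Rq q x) + lamq q • Rq q x = x := by
    intro q x
    have := LinearMap.ext_iff.mp (hRq1 q) x
    simpa using this
  have hPid : ∀ x y : H, ⟪T (R x), y⟫_ℝ + lam * ⟪R x, y⟫_ℝ = ⟪x, y⟫_ℝ := by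
    intro x y
    have h := hRid x
    calc ⟪T (R x), y⟫_ℝ + lam * ⟪R x, y⟫_ℝ
        = ⟪T (R x) + lam • R x, y⟫_ℝ := by
          rw [inner_add_left, real_inner_smul_left]
      _ = ⟪x, y⟫_ℝ := by rw [h]
  -- nonnegativity of ⟪R x, x⟫
  have hRpos : ∀ x : H, 0 ≤ ⟪R x, x⟫_ℝ := by
    intro x
    have h := hPid x (R x)
    have h1 : 0 ≤ ⟪T (R x), R x⟫_ℝ := hTpos _
    have h2 : 0 ≤ lam * ⟪R x, R x⟫_ℝ :=
      mul_nonneg hlam.le real_inner_self_nonneg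
    have h3 : 0 ≤ ⟪x, R x⟫_ℝ := by rw [← h]; linarith
    rwa [real_inner_comm] at h3
  -- Cauchy-Schwarz in the (T + lam)-inner product
  have hCS : ∀ x v : H, ⟪x, v⟫_ℝ ^ 2 ≤ ⟪R x, x⟫_ℝ * (⟪T v, v⟫_ℝ + lam * ⟪v, v⟫_ℝ) := by
    intro x v
    have key : ∀ t : ℝ, 0 ≤ (⟪T v, v⟫_ℝ + lam * ⟪v, v⟫_ℝ) * (t * t)
        + (2 * ⟪x, v⟫_ℝ) * t + ⟪R x, x⟫_ℝ := by
      intro t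
      have h0 : 0 ≤ ⟪T (R x + t • v), R x + t • v⟫_ℝ
          + lam * ⟪R x + t • v, R x + t • v⟫_ℝ := by
        have ha := hTpos (R x + t • v)
        have hb := mul_nonneg hlam.le (real_inner_self_nonneg (x := R x + t • v))
        linarith
      have hexp : ⟪T (R x + t • v), R x + t • v⟫_ℝ
          + lam * ⟪R x + t • v, R x + t • v⟫_ℝ
          = (⟪T v, v⟫_ℝ + lam * ⟪v, v⟫_ℝ) * (t * t)
            + (2 * ⟪x, v⟫_ℝ) * t + ⟪x, R x⟫_ℝ := by
        have e1 : T (R x + t • v) = T (R x) + t • T v := by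
          rw [map_add, map_smul]
        rw [e1]
        simp only [inner_add_left, inner_add_right, real_inner_smul_left,
          real_inner_smul_right]
        have hsym1 : ⟪T v, R x⟫_ℝ = ⟪T (R x), v⟫_ℝ := hTsymm v (R x)
        have hp1 := hPid x (R x)
        have hp2 := hPid x v
        have hvRx : ⟪v, R x⟫_ℝ = ⟪R x, v⟫_ℝ := real_inner_comm _ _
        linear_combination hp1 + 2*t*hp2 + t*hsym1 + t*lam*hvRx
      rw [hexp] at h0
      have hxRx : ⟪x, R x⟫_ℝ = ⟪R x, x⟫_ℝ := real_inner_comm _ _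
      linarith
    exact my_discrim_cs key
  -- Rq q (φ i) lies in the local span
  have hmem : ∀ q, ∀ i ∈ I q, Rq q (φ i) ∈ Submodule.span ℝ (φ '' ((I q : Set (Fin n)))) := by
    intro q i hi
    set Sq := Submodule.span ℝ (φ '' ((I q : Set (Fin n)))) with hSq
    have hφmem : φ i ∈ Sq := Submodule.subset_span ⟨i, hi, rfl⟩
    have hTqmem : ∀ h : H, Tq q h ∈ Sq := by
      intro h
      rw [hTq]
      refine Submodule.smul_mem _ _ (Submodule.sum_mem _ fun j hj => ?_)
      exact Submodule.smul_mem _ _ (Submodule.subset_span ⟨j, hj, rfl⟩)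
    set A : H →ₗ[ℝ] H := Tq q + lamq q • LinearMap.id with hA
    have hAmem : ∀ x ∈ Sq, A x ∈ Sq := by
      intro x hx
      rw [hA]
      simp only [LinearMap.add_apply, LinearMap.smul_apply, LinearMap.id_apply]
      exact Submodule.add_mem _ (hTqmem x) (Submodule.smul_mem _ _ hx)
    have hRqA : ∀ x : H, Rq q (A x) = x := by
      intro x
      have := LinearMap.ext_iff.mp (hRq2 q) x
      simpa [hA] using this
    set f : Sq →ₗ[ℝ] Sq := A.restrict hAmem with hf
    have hfinj : Function.Injective f := by
      intro a b hab
      have h1 : A a.val = A b.val := congrArg Subtype.val hab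
      have h2 := congrArg (Rq q) h1
      rw [hRqA, hRqA] at h2
      exact Subtype.ext h2
    have hfsurj : Function.Surjective f :=
      (LinearMap.injective_iff_surjective).mp hfinj
    obtain ⟨w, hw⟩ := hfsurj ⟨φ i, hφmem⟩
    have hw' : A w.val = φ i := congrArg Subtype.val hw
    have hfin : Rq q (φ i) = w.val := by rw [← hw', hRqA]
    rw [hfin]; exact w.property
  -- angle bound
  have hang : ∀ q (v : H), v ∈ Submodule.span ℝ (φ '' ((I q : Set (Fin n)))) →
      ∀ j, j ∉ I q → ⟪v, φ j⟫_ℝ ^ 2 ≤ c ^ 2 * κ ^ 2 * ‖v‖ ^ 2 := by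
    intro q v hv j hj
    obtain ⟨k, hk⟩ := hcover j
    have hqk : q ≠ k := by rintro rfl; exact hj hk
    by_cases hv0 : v = 0
    · simp [hv0]
    by_cases hφ0 : φ j = 0
    · have hz : ⟪v, φ j⟫_ℝ = 0 := by rw [hφ0, inner_zero_right]
      rw [hz]
      have : (0:ℝ) ≤ c ^ 2 * κ ^ 2 * ‖v‖ ^ 2 := by positivity
      nlinarith [this]
    have hnv : (0:ℝ) < ‖v‖ := norm_pos_iff.mpr hv0
    have hnφ : (0:ℝ) < ‖φ j‖ := norm_pos_iff.mpr hφ0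
    set u := ‖v‖⁻¹ • v with hu
    set w := ‖φ j‖⁻¹ • φ j with hwdef
    have hum : u ∈ Submodule.span ℝ (φ '' ((I q : Set (Fin n)))) :=
      Submodule.smul_mem _ _ hv
    have hunm : -u ∈ Submodule.span ℝ (φ '' ((I q : Set (Fin n)))) :=
      Submodule.neg_mem _ hum
    have hwm : w ∈ Submodule.span ℝ (φ '' ((I k : Set (Fin n)))) :=
      Submodule.smul_mem _ _ (Submodule.subset_span ⟨j, hk, rfl⟩)
    have hun : ‖u‖ = 1 := by
      rw [hu, norm_smul, norm_inv, norm_norm, inv_mul_cancel₀ hnv.ne']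
    have hwn : ‖w‖ = 1 := by
      rw [hwdef, norm_smul, norm_inv, norm_norm, inv_mul_cancel₀ hnφ.ne']
    have h1 : ⟪u, w⟫_ℝ ≤ c := hc q k hqk u hum w hwm hun hwn
    have h2 : ⟪-u, w⟫_ℝ ≤ c := hc q k hqk (-u) hunm w hwm (by rw [norm_neg]; exact hun) hwn
    rw [inner_neg_left] at h2
    have habs : ⟪u, w⟫_ℝ ^ 2 ≤ c ^ 2 := by nlinarith
    have heq : ⟪v, φ j⟫_ℝ = ‖v‖ * ‖φ j‖ * ⟪u, w⟫_ℝ := by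
      rw [hu, hwdef, real_inner_smul_left, real_inner_smul_right]
      field_simp
    rw [heq]
    have hκj : ‖φ j‖ ≤ κ := hκ j
    have h3 : ‖φ j‖ ^ 2 ≤ κ ^ 2 := by nlinarith
    have h4 : (‖v‖ * ‖φ j‖ * ⟪u, w⟫_ℝ) ^ 2 = ‖v‖^2 * ‖φ j‖^2 * ⟪u, w⟫_ℝ^2 := by ring
    rw [h4]
    have h5 : ‖φ j‖ ^ 2 * ⟪u, w⟫_ℝ ^ 2 ≤ κ ^ 2 * c ^ 2 :=
      mul_le_mul h3 habs (sq_nonneg _) (sq_nonneg κ)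
    have h6 := mul_le_mul_of_nonneg_left h5 (sq_nonneg ‖v‖)
    calc ‖v‖ ^ 2 * ‖φ j‖ ^ 2 * ⟪u, w⟫_ℝ ^ 2
        = ‖v‖ ^ 2 * (‖φ j‖ ^ 2 * ⟪u, w⟫_ℝ ^ 2) := by ring
      _ ≤ ‖v‖ ^ 2 * (κ ^ 2 * c ^ 2) := h6
      _ = c ^ 2 * κ ^ 2 * ‖v‖ ^ 2 := by ring
  -- per-index inequality
  have hkey : ∀ q, ∀ i ∈ I q,
      (((I q).card : ℝ))⁻¹ * ⟪Rq q (φ i), φ i⟫_ℝ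
        ≤ C * ((n : ℝ)⁻¹ * ⟪R (φ i), φ i⟫_ℝ) := by
    intro q i hi
    have hnq : (0:ℝ) < (I q).card := by
      exact_mod_cast Finset.card_pos.mpr (hne q)
    set ρ : ℝ := ((I q).card : ℝ) / n with hρ
    have hρpos : 0 < ρ := by positivity
    have hlamq' : ρ * lamq q = lam := by
      rw [hlamq, hρ]; field_simp
    have hlamqpos : 0 < lamq q := by
      rw [hlamq]; exact div_pos hlam (div_pos hnq hn')
    set v := Rq q (φ i) with hv
    set β := ⟪v, φ i⟫_ℝ with hβ
    set α := ⟪R (φ i), φ i⟫_ℝ with hα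
    have hα0 : 0 ≤ α := hRpos _
    have hβeq : β = ⟪Tq q v, v⟫_ℝ + lamq q * ⟪v, v⟫_ℝ := by
      have h := hRqid q (φ i)
      have h' : ⟪φ i, v⟫_ℝ = ⟪Tq q v + lamq q • v, v⟫_ℝ := by
        conv_lhs => rw [← h]
      rw [inner_add_left, real_inner_smul_left] at h'
      rw [hβ, real_inner_comm, h']
    have hβ0 : 0 ≤ β := by
      rw [hβeq]
      have := hTqpos q v
      have := mul_nonneg hlamqpos.le (real_inner_self_nonneg (x := v))
      linarith
    have hvv : lamq q * ⟪v, v⟫_ℝ ≤ β := by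
      rw [hβeq]; linarith [hTqpos q v]
    -- bound on ⟪T v, v⟫ + lam ⟪v,v⟫
    have hTvv : ⟪T v, v⟫_ℝ + lam * ⟪v, v⟫_ℝ ≤ ρ * C * β := by
      have hIqsum : ∑ j ∈ I q, ⟪v, φ j⟫_ℝ * ⟪v, φ j⟫_ℝ
          = ((I q).card : ℝ) * ⟪Tq q v, v⟫_ℝ := by
        rw [hTqinner, ← mul_assoc, mul_inv_cancel₀ hnq.ne', one_mul]
      have hrest : ∑ j ∈ Finset.univ \ I q, ⟪v, φ j⟫_ℝ * ⟪v, φ j⟫_ℝ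
          ≤ (n : ℝ) * (c ^ 2 * κ ^ 2 * ‖v‖ ^ 2) := by
        have hb : ∀ j ∈ Finset.univ \ I q,
            ⟪v, φ j⟫_ℝ * ⟪v, φ j⟫_ℝ ≤ c ^ 2 * κ ^ 2 * ‖v‖ ^ 2 := by
          intro j hj
          have hj' : j ∉ I q := (Finset.mem_sdiff.mp hj).2
          have hh := hang q v (hmem q i hi) j hj'
          calc ⟪v, φ j⟫_ℝ * ⟪v, φ j⟫_ℝ = ⟪v, φ j⟫_ℝ ^ 2 := by ring
            _ ≤ c ^ 2 * κ ^ 2 * ‖v‖ ^ 2 := hh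
        calc ∑ j ∈ Finset.univ \ I q, ⟪v, φ j⟫_ℝ * ⟪v, φ j⟫_ℝ
            ≤ ∑ _j ∈ Finset.univ \ I q, c ^ 2 * κ ^ 2 * ‖v‖ ^ 2 :=
              Finset.sum_le_sum hb
          _ = ((Finset.univ \ I q).card : ℝ) * (c ^ 2 * κ ^ 2 * ‖v‖ ^ 2) := by
              rw [Finset.sum_const, nsmul_eq_mul]
          _ ≤ (n : ℝ) * (c ^ 2 * κ ^ 2 * ‖v‖ ^ 2) := by
              have hcard : ((Finset.univ \ I q).card : ℝ) ≤ n := by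
                have h := Finset.card_le_card
                  (Finset.subset_univ (Finset.univ \ I q))
                have : ((Finset.univ \ I q).card : ℝ)
                    ≤ ((Finset.univ : Finset (Fin n)).card : ℝ) := Nat.cast_le.mpr h
                simpa using this
              have hX : (0:ℝ) ≤ c ^ 2 * κ ^ 2 * ‖v‖ ^ 2 := by positivity
              exact mul_le_mul_of_nonneg_right hcard hX
      have hsplit : ∑ j, ⟪v, φ j⟫_ℝ * ⟪v, φ j⟫_ℝ
          = ∑ j ∈ I q, ⟪v, φ j⟫_ℝ * ⟪v, φ j⟫_ℝ
            + ∑ j ∈ Finset.univ \ I q, ⟪v, φ j⟫_ℝ * ⟪v, φ j⟫_ℝ := by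
        rw [← Finset.sum_sdiff (Finset.subset_univ (I q))]; ring
      have h1 : ⟪T v, v⟫_ℝ ≤ ρ * ⟪Tq q v, v⟫_ℝ + c ^ 2 * κ ^ 2 * ⟪v, v⟫_ℝ := by
        rw [hTinner, hsplit, hIqsum]
        have step : (n:ℝ)⁻¹ * (((I q).card : ℝ) * ⟪Tq q v, v⟫_ℝ
            + ∑ j ∈ Finset.univ \ I q, ⟪v, φ j⟫_ℝ * ⟪v, φ j⟫_ℝ)
            ≤ (n:ℝ)⁻¹ * (((I q).card : ℝ) * ⟪Tq q v, v⟫_ℝ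
              + (n : ℝ) * (c ^ 2 * κ ^ 2 * ‖v‖ ^ 2)) := by
          apply mul_le_mul_of_nonneg_left _ (by positivity)
          linarith
        refine le_trans step (le_of_eq ?_)
        rw [real_inner_self_eq_norm_sq, hρ]
        rw [mul_add, ← mul_assoc (n:ℝ)⁻¹ (n:ℝ), inv_mul_cancel₀ hn'.ne', one_mul]
        ring
      have h5 : ρ * (lamq q * ⟪v, v⟫_ℝ) = lam * ⟪v, v⟫_ℝ := by
        rw [← mul_assoc, hlamq']
      have h6 : ρ * β = ρ * ⟪Tq q v, v⟫_ℝ + lam * ⟪v, v⟫_ℝ := by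
        rw [hβeq, mul_add, h5]
      have h7 : c ^ 2 * κ ^ 2 * ⟪v, v⟫_ℝ ≤ ρ * (κ ^ 2 * c ^ 2 / lam) * β := by
        have h4 : c ^ 2 * κ ^ 2 * ρ * (lamq q * ⟪v, v⟫_ℝ)
            ≤ c ^ 2 * κ ^ 2 * ρ * β :=
          mul_le_mul_of_nonneg_left hvv (mul_nonneg (mul_nonneg (sq_nonneg c) (sq_nonneg κ)) hρpos.le)
        have h4' : c ^ 2 * κ ^ 2 * lam * ⟪v, v⟫_ℝ ≤ c ^ 2 * κ ^ 2 * ρ * β := by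
          have he : c ^ 2 * κ ^ 2 * ρ * (lamq q * ⟪v, v⟫_ℝ)
              = c ^ 2 * κ ^ 2 * (ρ * lamq q) * ⟪v, v⟫_ℝ := by ring
          rw [he, hlamq'] at h4
          exact h4
        rw [show ρ * (κ ^ 2 * c ^ 2 / lam) * β = (c ^ 2 * κ ^ 2 * ρ * β) / lam by
          ring]
        rw [le_div_iff₀ hlam]
        calc c ^ 2 * κ ^ 2 * ⟪v, v⟫_ℝ * lam
            = c ^ 2 * κ ^ 2 * lam * ⟪v, v⟫_ℝ := by ring
          _ ≤ c ^ 2 * κ ^ 2 * ρ * β := h4'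
      have hCexp : ρ * C * β = ρ * β + ρ * (κ ^ 2 * c ^ 2 / lam) * β := by
        rw [hC]; ring
      have hstep := add_le_add_left h1 (lam * ⟪v, v⟫_ℝ)
      rw [hCexp]
      calc ⟪T v, v⟫_ℝ + lam * ⟪v, v⟫_ℝ
          ≤ ρ * ⟪Tq q v, v⟫_ℝ + c ^ 2 * κ ^ 2 * ⟪v, v⟫_ℝ + lam * ⟪v, v⟫_ℝ := hstep
        _ = (ρ * ⟪Tq q v, v⟫_ℝ + lam * ⟪v, v⟫_ℝ) + c ^ 2 * κ ^ 2 * ⟪v, v⟫_ℝ := by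
            ring
        _ = ρ * β + c ^ 2 * κ ^ 2 * ⟪v, v⟫_ℝ := by rw [← h6]
        _ ≤ ρ * β + ρ * (κ ^ 2 * c ^ 2 / lam) * β := by
            exact add_le_add_right h7 _
    -- Cauchy-Schwarz combination
    have hcs := hCS (φ i) v
    have hβφ : ⟪φ i, v⟫_ℝ = β := by rw [hβ, real_inner_comm]
    rw [hβφ, ← hα] at hcs
    have hmain : β ^ 2 ≤ α * (ρ * C * β) :=
      le_trans hcs (mul_le_mul_of_nonneg_left hTvv hα0)
    rcases eq_or_lt_of_le hβ0 with hβz | hβp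
    · rw [← hβz, mul_zero]
      exact mul_nonneg hC0 (mul_nonneg (by positivity) hα0)
    · have hβle : β ≤ α * ρ * C := by
        have h8 : β * β ≤ (α * ρ * C) * β := by
          calc β * β = β ^ 2 := by ring
            _ ≤ α * (ρ * C * β) := hmain
            _ = (α * ρ * C) * β := by ring
        exact le_of_mul_le_mul_right h8 hβp
      calc (((I q).card : ℝ))⁻¹ * β
          ≤ (((I q).card : ℝ))⁻¹ * (α * ρ * C) := by
            apply mul_le_mul_of_nonneg_left hβle (inv_nonneg.mpr hnq.le)
        _ = C * ((n : ℝ)⁻¹ * α) := by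
            have hcc : (((I q).card : ℝ))⁻¹ * ((I q).card : ℝ) = 1 :=
              inv_mul_cancel₀ hnq.ne'
            rw [hρ]
            calc (((I q).card : ℝ))⁻¹ * (α * (((I q).card : ℝ) / n) * C)
                = ((((I q).card : ℝ))⁻¹ * ((I q).card : ℝ))
                  * (α * (n : ℝ)⁻¹ * C) := by ring
              _ = C * ((n : ℝ)⁻¹ * α) := by rw [hcc]; ring
  -- trace formulas
  have htr : LinearMap.trace ℝ H (R ∘ₗ T)
      = (n : ℝ)⁻¹ * ∑ i, ⟪R (φ i), φ i⟫_ℝ := by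
    apply my_trace_sum Finset.univ φ (fun i => R (φ i))
    intro h
    rw [comp_apply, hT, map_smul, map_sum]
    simp only [map_smul]
  have htrq : ∀ q, LinearMap.trace ℝ H (Rq q ∘ₗ Tq q)
      = (((I q).card : ℝ))⁻¹ * ∑ i ∈ I q, ⟪Rq q (φ i), φ i⟫_ℝ := by
    intro q
    apply my_trace_sum (I q) φ (fun i => Rq q (φ i))
    intro h
    rw [comp_apply, hTq, map_smul, map_sum]
    simp only [map_smul]
  -- partition of the full sum
  have hU : Finset.univ.biUnion I = (Finset.univ : Finset (Fin n)) := by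
    ext i
    simp only [Finset.mem_biUnion, Finset.mem_univ, true_and, iff_true]
    exact hcover i
  have hpd : (↑(Finset.univ : Finset (Fin Q)) : Set (Fin Q)).PairwiseDisjoint I :=
    fun q _ k _ hqk => hdisj q k hqk
  have hpart : ∑ i, ⟪R (φ i), φ i⟫_ℝ = ∑ q, ∑ i ∈ I q, ⟪R (φ i), φ i⟫_ℝ := by
    rw [← hU, Finset.sum_biUnion hpd]
  -- final combination
  calc ∑ q, LinearMap.trace ℝ H (Rq q ∘ₗ Tq q)
      = ∑ q, ∑ i ∈ I q, (((I q).card : ℝ))⁻¹ * ⟪Rq q (φ i), φ i⟫_ℝ := by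
        refine Finset.sum_congr rfl fun q _ => ?_
        rw [htrq q, Finset.mul_sum]
    _ ≤ ∑ q, ∑ i ∈ I q, C * ((n : ℝ)⁻¹ * ⟪R (φ i), φ i⟫_ℝ) := by
        refine Finset.sum_le_sum fun q _ => Finset.sum_le_sum fun i hi => hkey q i hi
    _ = C * ((n : ℝ)⁻¹ * ∑ q, ∑ i ∈ I q, ⟪R (φ i), φ i⟫_ℝ) := by
        simp only [Finset.mul_sum]
    _ = C * LinearMap.trace ℝ H (R ∘ₗ T) := by
        rw [htr, hpart]
end
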